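/- arXiv:2503.12818 — 9 statements merged into one kernel-verified Lean document; each statement's English description precedes it below -/
import Mathlib

section
/- There exists a unique function v* : S → ℝ satisfying the Bellman optimality equation v* s = max_{a ∈ A} (r s a + γ * ∑_{s'} P s a s' * v* s') for all s ∈ S. -/
/-- There exists a unique solution of the Bellman optimality equation. -/
theorem bellman_optimality_exists_unique
    {S A : Type*} [Fintype S] [Nonempty S] [Fintype A] [Nonempty A]
    (P : S → A → S → ℝ) (hP0 : ∀ s a s', 0 ≤ P s a s')
    (hP1 : ∀ s a, ∑ s', P s a s' = 1)
    (r : S → A → ℝ) (γ : ℝ) (hγ0 : 0 < γ) (hγ1 : γ < 1) :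
    ∃! v : S → ℝ, ∀ s, v s = Finset.univ.sup' Finset.univ_nonempty
      (fun a => r s a + γ * ∑ s', P s a s' * v s') := by
  set T : (S → ℝ) → (S → ℝ) := fun v s => Finset.univ.sup' Finset.univ_nonempty
      (fun a => r s a + γ * ∑ s', P s a s' * v s') with hT
  -- one-sided sup' comparison
  have sup_diff : ∀ (v w : S → ℝ) (s : S), T v s - T w s ≤ γ * dist v w := by
    intro v w s
    have h1 : T v s ≤ γ * dist v w + T w s := by
      apply Finset.sup'_le
      intro a _
      have h2 : (r s a + γ * ∑ s', P s a s' * w s') ≤ T w s :=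
        Finset.le_sup' (fun a => r s a + γ * ∑ s', P s a s' * w s') (Finset.mem_univ a)
      have h3 : γ * ∑ s', P s a s' * v s' - γ * ∑ s', P s a s' * w s'
          ≤ γ * dist v w := by
        rw [← mul_sub, ← Finset.sum_sub_distrib]
        have : ∑ s', (P s a s' * v s' - P s a s' * w s') ≤ dist v w := by
          calc ∑ s', (P s a s' * v s' - P s a s' * w s')
              = ∑ s', P s a s' * (v s' - w s') := by
                apply Finset.sum_congr rfl; intro s' _; ring
            _ ≤ ∑ s', P s a s' * dist v w := by
                apply Finset.sum_le_sum
                intro s' _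
                apply mul_le_mul_of_nonneg_left _ (hP0 s a s')
                calc v s' - w s' ≤ |v s' - w s'| := le_abs_self _
                  _ = dist (v s') (w s') := (Real.dist_eq _ _).symm
                  _ ≤ dist v w := dist_le_pi_dist v w s'
            _ = dist v w := by rw [← Finset.sum_mul, hP1, one_mul]
        exact mul_le_mul_of_nonneg_left this hγ0.le
      linarith
    linarith
  have key : ∀ v w : S → ℝ, dist (T v) (T w) ≤ γ * dist v w := by
    intro v w
    rw [dist_pi_le_iff (by positivity)]
    intro s
    rw [Real.dist_eq, abs_sub_le_iff]
    constructor
    · exact sup_diff v w s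
    · have := sup_diff w v s
      rwa [dist_comm] at this
  have hc : ContractingWith γ.toNNReal T := by
    constructor
    · rw [← Real.toNNReal_one]
      exact (Real.toNNReal_lt_toNNReal_iff (by norm_num)).mpr hγ1
    · apply LipschitzWith.of_dist_le_mul
      intro v w
      rw [Real.coe_toNNReal γ hγ0.le]
      exact key v w
  refine ⟨hc.fixedPoint T, ?_, ?_⟩
  · intro s
    conv_lhs => rw [← hc.fixedPoint_isFixedPt]
  · intro w hw
    exact hc.fixedPoint_unique (funext fun s => (hw s).symm)
end

section
/- (Policy improvement, Lemma 1.) Let π, π' : S → A be deterministic policies with value functions v_π and v_{π'} (the solutions of their respective Bellman expectation equations). If π' is greedy with respect to q_π, i.e., for every state s, q_π(s, π' s) = max_{a ∈ A} q_π(s, a), where q_π(s, a) = r s a + γ * ∑_{s'} P s a s' * v_π s', then v_π s ≤ v_{π'} s for every state s ∈ S. -/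
/-- Policy improvement (Lemma 1): if `π'` is greedy with respect to `q_π`,
then `v_π ≤ v_{π'}` pointwise. -/
theorem policy_improvement
    {S A : Type*} [Fintype S] [Nonempty S] [Fintype A] [Nonempty A]
    (P : S → A → S → ℝ) (hP0 : ∀ s a s', 0 ≤ P s a s')
    (hP1 : ∀ s a, ∑ s', P s a s' = 1)
    (r : S → A → ℝ) (γ : ℝ) (hγ0 : 0 < γ) (hγ1 : γ < 1)
    (π π' : S → A) (vπ vπ' : S → ℝ)
    (hv : ∀ s, vπ s = r s (π s) + γ * ∑ s', P s (π s) s' * vπ s')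
    (hv' : ∀ s, vπ' s = r s (π' s) + γ * ∑ s', P s (π' s) s' * vπ' s')
    (hgreedy : ∀ s, r s (π' s) + γ * ∑ s', P s (π' s) s' * vπ s'
        = Finset.univ.sup' Finset.univ_nonempty
            (fun a => r s a + γ * ∑ s', P s a s' * vπ s')) :
    ∀ s, vπ s ≤ vπ' s := by
  set g : S → ℝ := fun s => vπ s - vπ' s with hg
  -- key pointwise inequality
  have hkey : ∀ s, g s ≤ γ * ∑ s', P s (π' s) s' * g s' := by
    intro s
    have h1 : vπ s ≤ r s (π' s) + γ * ∑ s', P s (π' s) s' * vπ s' := by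
      rw [hgreedy s]
      have := Finset.le_sup' (fun a => r s a + γ * ∑ s', P s a s' * vπ s')
        (Finset.mem_univ (π s))
      calc vπ s = r s (π s) + γ * ∑ s', P s (π s) s' * vπ s' := hv s
        _ ≤ _ := this
    have h2 : g s ≤ γ * ∑ s', P s (π' s) s' * vπ s'
        - γ * ∑ s', P s (π' s) s' * vπ' s' := by
      have := hv' s
      simp only [hg]
      linarith
    calc g s ≤ γ * ∑ s', P s (π' s) s' * vπ s'
        - γ * ∑ s', P s (π' s) s' * vπ' s' := h2
      _ = γ * ∑ s', P s (π' s) s' * g s' := by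
          rw [← mul_sub, ← Finset.sum_sub_distrib]
          congr 1; apply Finset.sum_congr rfl; intros; ring
  obtain ⟨s0, _, hs0⟩ := Finset.exists_max_image Finset.univ g Finset.univ_nonempty
  have hM : g s0 ≤ γ * g s0 := by
    calc g s0 ≤ γ * ∑ s', P s0 (π' s0) s' * g s' := hkey s0
      _ ≤ γ * ∑ s', P s0 (π' s0) s' * g s0 := by
          apply mul_le_mul_of_nonneg_left _ hγ0.le
          apply Finset.sum_le_sum
          intro i _
          exact mul_le_mul_of_nonneg_left (hs0 i (Finset.mem_univ i)) (hP0 _ _ _)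
      _ = γ * g s0 := by rw [← Finset.sum_mul, hP1, one_mul]
  have hM0 : g s0 ≤ 0 := by nlinarith
  intro s
  have := hs0 s (Finset.mem_univ s)
  simp only [hg] at this hM0 ⊢
  linarith
end

section
/- If the value function v_π of a deterministic policy π : S → A satisfies the Bellman optimality equation v_π s = max_{a ∈ A} (r s a + γ * ∑_{s'} P s a s' * v_π s') for all s ∈ S, then π is optimal among all deterministic policies: for every deterministic policy σ : S → A with value function v_σ and every state s ∈ S, v_σ s ≤ v_π s. -/
/-- If the value function of `π` satisfies the Bellman optimality equation,
then `π` is optimal among all deterministic policies. -/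
theorem bellman_optimal_implies_policy_optimal
    {S A : Type*} [Fintype S] [Nonempty S] [Fintype A] [Nonempty A]
    (P : S → A → S → ℝ) (hP0 : ∀ s a s', 0 ≤ P s a s')
    (hP1 : ∀ s a, ∑ s', P s a s' = 1)
    (r : S → A → ℝ) (γ : ℝ) (hγ0 : 0 < γ) (hγ1 : γ < 1)
    (π : S → A) (vπ : S → ℝ)
    (hv : ∀ s, vπ s = r s (π s) + γ * ∑ s', P s (π s) s' * vπ s')
    (hopt : ∀ s, vπ s = Finset.univ.sup' Finset.univ_nonempty
        (fun a => r s a + γ * ∑ s', P s a s' * vπ s')) :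
    ∀ (σ : S → A) (vσ : S → ℝ),
      (∀ s, vσ s = r s (σ s) + γ * ∑ s', P s (σ s) s' * vσ s') →
      ∀ s, vσ s ≤ vπ s := by
  intro σ vσ hw
  set d : S → ℝ := fun s => vσ s - vπ s with hd
  set M : ℝ := Finset.univ.sup' Finset.univ_nonempty d with hM
  have hdM : ∀ s, d s ≤ M := fun s =>
    Finset.le_sup' d (Finset.mem_univ s)
  -- key step bound for each s
  have hstep : ∀ s, d s ≤ γ * M := by
    intro s
    have hπge : r s (σ s) + γ * ∑ s', P s (σ s) s' * vπ s' ≤ vπ s := by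
      rw [hopt s]
      exact Finset.le_sup' (fun a => r s a + γ * ∑ s', P s a s' * vπ s')
        (Finset.mem_univ (σ s))
    have h1 : d s ≤ γ * ∑ s', P s (σ s) s' * d s' := by
      have : vσ s - vπ s ≤ (r s (σ s) + γ * ∑ s', P s (σ s) s' * vσ s')
          - (r s (σ s) + γ * ∑ s', P s (σ s) s' * vπ s') := by
        rw [← hw s]; linarith
      calc d s ≤ γ * ((∑ s', P s (σ s) s' * vσ s') - ∑ s', P s (σ s) s' * vπ s') := by
            simpa [hd, mul_sub] using this
        _ = γ * ∑ s', P s (σ s) s' * d s' := by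
            rw [← Finset.sum_sub_distrib]
            simp [hd, mul_sub]
    have h2 : ∑ s', P s (σ s) s' * d s' ≤ M := by
      calc ∑ s', P s (σ s) s' * d s' ≤ ∑ s', P s (σ s) s' * M :=
            Finset.sum_le_sum fun i _ =>
              mul_le_mul_of_nonneg_left (hdM i) (hP0 s (σ s) i)
        _ = M := by rw [← Finset.sum_mul, hP1]; ring
    calc d s ≤ γ * ∑ s', P s (σ s) s' * d s' := h1
      _ ≤ γ * M := by nlinarith
  have hMle : M ≤ γ * M := by
    obtain ⟨s0, _, hs0⟩ := Finset.exists_mem_eq_sup' Finset.univ_nonempty d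
    have hMs : M = d s0 := by rw [hM]; exact hs0
    rw [hMs]; exact hMs ▸ hstep s0
  have hM0 : M ≤ 0 := by nlinarith
  intro s
  have := hdM s
  simp only [hd] at this
  linarith
end

section
/- Let v* : S → ℝ be the unique solution of the Bellman optimality equation v* s = max_{a ∈ A} (r s a + γ * ∑_{s'} P s a s' * v* s'). Then v* dominates the value function of every deterministic policy: for every deterministic policy σ : S → A with value function v_σ and every state s ∈ S, v_σ s ≤ v* s. -/
/-- The solution of the Bellman optimality equation dominates the value
function of every deterministic policy. -/
theorem optimal_value_dominates
    {S A : Type*} [Fintype S] [Nonempty S] [Fintype A] [Nonempty A]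
    (P : S → A → S → ℝ) (hP0 : ∀ s a s', 0 ≤ P s a s')
    (hP1 : ∀ s a, ∑ s', P s a s' = 1)
    (r : S → A → ℝ) (γ : ℝ) (hγ0 : 0 < γ) (hγ1 : γ < 1)
    (vstar : S → ℝ)
    (hstar : ∀ s, vstar s = Finset.univ.sup' Finset.univ_nonempty
        (fun a => r s a + γ * ∑ s', P s a s' * vstar s')) :
    ∀ (σ : S → A) (vσ : S → ℝ),
      (∀ s, vσ s = r s (σ s) + γ * ∑ s', P s (σ s) s' * vσ s') →
      ∀ s, vσ s ≤ vstar s := by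
  intro σ vσ hv s
  set d : S → ℝ := fun s => vσ s - vstar s with hd
  obtain ⟨s0, -, hs0'⟩ := Finset.exists_max_image Finset.univ d Finset.univ_nonempty
  set M : ℝ := d s0 with hM
  have hdM : ∀ s, d s ≤ M := fun s => hs0' s (Finset.mem_univ s)
  have hs0 : M ≤ d s0 := le_refl _
  have hstar_ge : ∀ s a, r s a + γ * ∑ s', P s a s' * vstar s' ≤ vstar s := by
    intro s a
    rw [hstar s]
    exact Finset.le_sup' (fun a => r s a + γ * ∑ s', P s a s' * vstar s') (Finset.mem_univ a)
  have key : M ≤ γ * M := by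
    have h1 : d s0 ≤ γ * ∑ s', P s0 (σ s0) s' * d s' := by
      have := hstar_ge s0 (σ s0)
      have hvσ := hv s0
      simp only [hd]
      have : vσ s0 - vstar s0 ≤
          (r s0 (σ s0) + γ * ∑ s', P s0 (σ s0) s' * vσ s') -
          (r s0 (σ s0) + γ * ∑ s', P s0 (σ s0) s' * vstar s') := by
        rw [← hvσ]; linarith [hstar_ge s0 (σ s0)]
      calc vσ s0 - vstar s0 ≤ _ := this
        _ = γ * ∑ s', P s0 (σ s0) s' * (vσ s' - vstar s') := by
            simp only [mul_sub, Finset.mul_sum, Finset.sum_sub_distrib]; ring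
    have h2 : ∑ s', P s0 (σ s0) s' * d s' ≤ M := by
      calc ∑ s', P s0 (σ s0) s' * d s' ≤ ∑ s', P s0 (σ s0) s' * M := by
            apply Finset.sum_le_sum; intro i _
            exact mul_le_mul_of_nonneg_left (hdM i) (hP0 _ _ _)
        _ = M := by rw [← Finset.sum_mul, hP1, one_mul]
    calc M ≤ d s0 := hs0
      _ ≤ γ * ∑ s', P s0 (σ s0) s' * d s' := h1
      _ ≤ γ * M := by nlinarith
  have hM0 : M ≤ 0 := by nlinarith
  have := hdM s
  simp only [hd] at this
  linarith
end

section
/- Let v* : S → ℝ be the unique solution of the Bellman optimality equation v* s = max_{a ∈ A} (r s a + γ * ∑_{s'} P s a s' * v* s'), and let π* : S → A be any policy that is greedy with respect to v*, i.e., r s (π* s) + γ * ∑_{s'} P s (π* s) s' * v* s' = max_{a ∈ A} (r s a + γ * ∑_{s'} P s a s' * v* s') for all s. Then the value function of π* equals v*: v_{π*} s = v* s for all s ∈ S. -/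
/-- A policy greedy with respect to the solution `v*` of the Bellman
optimality equation has value function equal to `v*`. -/
theorem greedy_policy_attains_optimal_value
    {S A : Type*} [Fintype S] [Nonempty S] [Fintype A] [Nonempty A]
    (P : S → A → S → ℝ) (hP0 : ∀ s a s', 0 ≤ P s a s')
    (hP1 : ∀ s a, ∑ s', P s a s' = 1)
    (r : S → A → ℝ) (γ : ℝ) (hγ0 : 0 < γ) (hγ1 : γ < 1)
    (vstar : S → ℝ)
    (hstar : ∀ s, vstar s = Finset.univ.sup' Finset.univ_nonempty
        (fun a => r s a + γ * ∑ s', P s a s' * vstar s'))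
    (πstar : S → A)
    (hgreedy : ∀ s, r s (πstar s) + γ * ∑ s', P s (πstar s) s' * vstar s'
        = Finset.univ.sup' Finset.univ_nonempty
            (fun a => r s a + γ * ∑ s', P s a s' * vstar s'))
    (vπ : S → ℝ)
    (hv : ∀ s, vπ s = r s (πstar s) + γ * ∑ s', P s (πstar s) s' * vπ s') :
    ∀ s, vπ s = vstar s := by
  set w : S → ℝ := fun s => vπ s - vstar s with hw
  have hrec : ∀ s, w s = γ * ∑ s', P s (πstar s) s' * w s' := by
    intro s
    have h1 : vstar s = r s (πstar s) + γ * ∑ s', P s (πstar s) s' * vstar s' := by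
      rw [hstar s, ← hgreedy s]
    have := hv s
    have hsum : ∑ s', P s (πstar s) s' * w s'
        = (∑ s', P s (πstar s) s' * vπ s') - ∑ s', P s (πstar s) s' * vstar s' := by
      rw [← Finset.sum_sub_distrib]
      exact Finset.sum_congr rfl fun x _ => by simp only [hw]; ring
    simp only [hw]
    rw [this, h1, hsum]
    ring
  set M : ℝ := Finset.univ.sup' Finset.univ_nonempty (fun s => |w s|) with hM
  have hle : ∀ s, |w s| ≤ M := fun s =>
    Finset.le_sup' (fun s => |w s|) (Finset.mem_univ s)
  obtain ⟨s0, _, hs0⟩ := Finset.exists_mem_eq_sup' (Finset.univ_nonempty) (fun s : S => |w s|)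
  have hbound : M ≤ γ * M := by
    calc M = |w s0| := by rw [hM, hs0]
      _ = |γ * ∑ s', P s0 (πstar s0) s' * w s'| := by rw [hrec s0]
      _ = γ * |∑ s', P s0 (πstar s0) s' * w s'| := by
          rw [abs_mul, abs_of_pos hγ0]
      _ ≤ γ * ∑ s', |P s0 (πstar s0) s' * w s'| := by
          apply mul_le_mul_of_nonneg_left (Finset.abs_sum_le_sum_abs _ _) hγ0.le
      _ ≤ γ * ∑ s', P s0 (πstar s0) s' * M := by
          apply mul_le_mul_of_nonneg_left _ hγ0.le
          apply Finset.sum_le_sum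
          intro i _
          rw [abs_mul, abs_of_nonneg (hP0 _ _ _)]
          exact mul_le_mul_of_nonneg_left (hle i) (hP0 _ _ _)
      _ = γ * M := by rw [← Finset.sum_mul, hP1, one_mul]
  have hM0 : 0 ≤ M := le_trans (abs_nonneg _) (hle (Classical.arbitrary S))
  have hMle0 : M ≤ 0 := by nlinarith
  intro s
  have : |w s| ≤ 0 := le_trans (hle s) hMle0
  have h0 : w s = 0 := abs_eq_zero.mp (le_antisymm this (abs_nonneg _))
  simp only [hw] at h0
  linarith
end

section
/- There exists an optimal deterministic policy: there is a policy π* : S → A such that for every deterministic policy σ : S → A and every state s ∈ S, v_σ s ≤ v_{π*} s, where v_σ and v_{π*} are the respective value functions. -/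
open Finset

private lemma abs_sup'_sub_sup'_le {α : Type*} (s : Finset α) (hs : s.Nonempty)
    (f g : α → ℝ) (c : ℝ) (h : ∀ a ∈ s, |f a - g a| ≤ c) :
    |s.sup' hs f - s.sup' hs g| ≤ c := by
  rw [abs_le]
  constructor
  · rw [neg_le, neg_sub, sub_le_iff_le_add]
    refine Finset.sup'_le _ _ fun a ha => ?_
    have h1 := (abs_le.mp (h a ha)).1
    have h2 : f a ≤ s.sup' hs f := Finset.le_sup' f ha
    linarith
  · rw [sub_le_iff_le_add]
    refine Finset.sup'_le _ _ fun a ha => ?_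
    have h1 := (abs_le.mp (h a ha)).2
    have h2 : g a ≤ s.sup' hs g := Finset.le_sup' g ha
    linarith

/-- There exists an optimal deterministic policy. -/
theorem exists_optimal_policy
    {S A : Type*} [Fintype S] [Nonempty S] [Fintype A] [Nonempty A]
    (P : S → A → S → ℝ) (hP0 : ∀ s a s', 0 ≤ P s a s')
    (hP1 : ∀ s a, ∑ s', P s a s' = 1)
    (r : S → A → ℝ) (γ : ℝ) (hγ0 : 0 < γ) (hγ1 : γ < 1) :
    ∃ (πstar : S → A) (vπstar : S → ℝ),
      (∀ s, vπstar s = r s (πstar s) + γ * ∑ s', P s (πstar s) s' * vπstar s') ∧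
      ∀ (σ : S → A) (vσ : S → ℝ),
        (∀ s, vσ s = r s (σ s) + γ * ∑ s', P s (σ s) s' * vσ s') →
        ∀ s, vσ s ≤ vπstar s := by
  classical
  have hA : (univ : Finset A).Nonempty := univ_nonempty
  have hS : (univ : Finset S).Nonempty := univ_nonempty
  set T : (S → ℝ) → (S → ℝ) :=
    fun v s => (univ : Finset A).sup' hA (fun a => r s a + γ * ∑ s', P s a s' * v s') with hT
  -- key bound on individual terms
  have hterm : ∀ (v w : S → ℝ) (s : S) (a : A),
      |(r s a + γ * ∑ s', P s a s' * v s') - (r s a + γ * ∑ s', P s a s' * w s')|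
        ≤ γ * dist v w := by
    intro v w s a
    have : (r s a + γ * ∑ s', P s a s' * v s') - (r s a + γ * ∑ s', P s a s' * w s')
        = γ * ∑ s', P s a s' * (v s' - w s') := by
      simp only [mul_sub]
      rw [Finset.sum_sub_distrib]
      ring
    rw [this, abs_mul, abs_of_pos hγ0]
    gcongr
    calc |∑ s', P s a s' * (v s' - w s')| ≤ ∑ s', |P s a s' * (v s' - w s')| :=
          Finset.abs_sum_le_sum_abs _ _
      _ ≤ ∑ s', P s a s' * dist v w := by
          apply Finset.sum_le_sum
          intro s' _
          rw [abs_mul, abs_of_nonneg (hP0 s a s')]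
          gcongr
          · exact hP0 s a s'
          · rw [← Real.dist_eq]
            exact dist_le_pi_dist v w s'
      _ = dist v w := by rw [← Finset.sum_mul, hP1, one_mul]
  have hK1 : (⟨γ, hγ0.le⟩ : NNReal) < 1 := by
    exact NNReal.coe_lt_coe.mp hγ1
  have hlip : LipschitzWith ⟨γ, hγ0.le⟩ T := by
    apply LipschitzWith.of_dist_le_mul
    intro v w
    have hd : (0 : ℝ) ≤ γ * dist v w := mul_nonneg hγ0.le dist_nonneg
    show dist (T v) (T w) ≤ γ * dist v w
    rw [dist_pi_le_iff hd]
    intro s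
    rw [Real.dist_eq]
    exact abs_sup'_sub_sup'_le _ hA _ _ _ (fun a _ => hterm v w s a)
  have hC : ContractingWith ⟨γ, hγ0.le⟩ T := ⟨hK1, hlip⟩
  set v : S → ℝ := ContractingWith.fixedPoint T hC with hv
  have hfix : T v = v := ContractingWith.fixedPoint_isFixedPt hC
  -- choose argmax policy
  have hargmax : ∀ s : S, ∃ a ∈ (univ : Finset A),
      (univ : Finset A).sup' hA (fun a => r s a + γ * ∑ s', P s a s' * v s')
        = r s a + γ * ∑ s', P s a s' * v s' :=
    fun s => Finset.exists_mem_eq_sup' hA _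
  choose πstar _ hπ using hargmax
  refine ⟨πstar, v, ?_, ?_⟩
  · intro s
    conv_lhs => rw [← hfix]
    exact hπ s
  · intro σ vσ hσ
    -- v s ≥ r s (σ s) + γ * ∑ P v
    have hvge : ∀ s, r s (σ s) + γ * ∑ s', P s (σ s) s' * v s' ≤ v s := by
      intro s
      conv_rhs => rw [← hfix]
      exact Finset.le_sup' (fun a => r s a + γ * ∑ s', P s a s' * v s') (mem_univ (σ s))
    set M : ℝ := (univ : Finset S).sup' hS (fun s => vσ s - v s) with hM
    have hle : ∀ s, vσ s - v s ≤ γ * M := by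
      intro s
      have h1 : vσ s - v s ≤ γ * ∑ s', P s (σ s) s' * (vσ s' - v s') := by
        have := hvge s
        rw [hσ s]
        have hsum : ∑ s', P s (σ s) s' * (vσ s' - v s')
            = (∑ s', P s (σ s) s' * vσ s') - ∑ s', P s (σ s) s' * v s' := by
          rw [← Finset.sum_sub_distrib]; congr 1; ext s'; ring
        rw [hsum]; linarith [mul_sub γ (∑ s', P s (σ s) s' * vσ s') (∑ s', P s (σ s) s' * v s')]
      refine h1.trans ?_
      gcongr
      calc ∑ s', P s (σ s) s' * (vσ s' - v s') ≤ ∑ s', P s (σ s) s' * M := by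
            apply Finset.sum_le_sum
            intro s' _
            exact mul_le_mul_of_nonneg_left (Finset.le_sup' (fun s => vσ s - v s) (mem_univ s')) (hP0 _ _ _)
        _ = M := by rw [← Finset.sum_mul, hP1, one_mul]
    have hMle : M ≤ γ * M := Finset.sup'_le _ _ fun s _ => hle s
    have hM0 : M ≤ 0 := by nlinarith
    intro s
    have : vσ s - v s ≤ M := Finset.le_sup' (fun s => vσ s - v s) (mem_univ s)
    linarith
end

section
/- (Convergence of policy iteration, Theorem 1.) Let (π_t)_{t ∈ ℕ} be a sequence of deterministic policies such that for every t, π_{t+1} is greedy with respect to q_{π_t}, i.e., q_{π_t}(s, π_{t+1} s) = max_{a ∈ A} q_{π_t}(s, a) for all s, where q_{π_t}(s, a) = r s a + γ * ∑_{s'} P s a s' * v_{π_t} s'. Then there exists m ∈ ℕ such that for all t ≥ m the value functions coincide, v_{π_t} = v_{π_m}, and π_m is optimal: v_σ s ≤ v_{π_m} s for every deterministic policy σ : S → A and every state s ∈ S. -/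
open Finset

/-- Comparison lemma: if `d s ≤ γ * ∑ p s s' * d s'` for a stochastic kernel `p`
and `0 ≤ γ < 1`, then `d ≤ 0`. -/
lemma pi_key_nonpos {S : Type*} [Fintype S] [Nonempty S]
    (p : S → S → ℝ) (hp0 : ∀ s s', 0 ≤ p s s') (hp1 : ∀ s, ∑ s', p s s' = 1)
    (γ : ℝ) (hγ0 : 0 ≤ γ) (hγ1 : γ < 1)
    (d : S → ℝ) (h : ∀ s, d s ≤ γ * ∑ s', p s s' * d s') : ∀ s, d s ≤ 0 := by
  obtain ⟨s0, -, hs0⟩ := Finset.exists_max_image (Finset.univ : Finset S) d univ_nonempty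
  have hM : ∀ s, d s ≤ d s0 := fun s => hs0 s (mem_univ s)
  have hsum : ∑ s', p s0 s' * d s' ≤ d s0 := by
    calc ∑ s', p s0 s' * d s'
        ≤ ∑ s', p s0 s' * d s0 :=
          Finset.sum_le_sum fun i _ => mul_le_mul_of_nonneg_left (hM i) (hp0 s0 i)
      _ = d s0 := by rw [← Finset.sum_mul, hp1, one_mul]
  have h1 : d s0 ≤ γ * d s0 :=
    (h s0).trans (mul_le_mul_of_nonneg_left hsum hγ0)
  have h2 : d s0 ≤ 0 := by nlinarith
  intro s; exact (hM s).trans h2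

/-- Convergence of policy iteration (Theorem 1): a policy iteration sequence
reaches, after finitely many steps, a policy whose value function is optimal
and is never changed afterwards. -/
theorem policy_iteration_converges
    {S A : Type*} [Fintype S] [Nonempty S] [Fintype A] [Nonempty A]
    (P : S → A → S → ℝ) (hP0 : ∀ s a s', 0 ≤ P s a s')
    (hP1 : ∀ s a, ∑ s', P s a s' = 1)
    (r : S → A → ℝ) (γ : ℝ) (hγ0 : 0 < γ) (hγ1 : γ < 1)
    (π : ℕ → S → A) (v : ℕ → S → ℝ)
    (hv : ∀ t s, v t s = r s (π t s) + γ * ∑ s', P s (π t s) s' * v t s')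
    (hgreedy : ∀ t s,
      r s (π (t + 1) s) + γ * ∑ s', P s (π (t + 1) s) s' * v t s'
        = Finset.univ.sup' Finset.univ_nonempty
            (fun a => r s a + γ * ∑ s', P s a s' * v t s')) :
    ∃ m : ℕ, (∀ t, m ≤ t → v t = v m) ∧
      ∀ (σ : S → A) (vσ : S → ℝ),
        (∀ s, vσ s = r s (σ s) + γ * ∑ s', P s (σ s) s' * vσ s') →
        ∀ s, vσ s ≤ v m s := by
  have hγ0' : (0:ℝ) ≤ γ := hγ0.le
  have sumsub : ∀ (q : S → ℝ) (u w : S → ℝ),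
      γ * ∑ s', q s' * (u s' - w s')
        = γ * ∑ s', q s' * u s' - γ * ∑ s', q s' * w s' := by
    intro q u w
    rw [← mul_sub, ← Finset.sum_sub_distrib]
    simp [mul_sub]
  -- policy improvement: values are nondecreasing
  have mono : ∀ t s, v t s ≤ v (t+1) s := by
    intro t
    have hkey := pi_key_nonpos (fun s => P s (π (t+1) s))
      (fun s s' => hP0 _ _ _) (fun s => hP1 _ _) γ hγ0' hγ1
      (fun s => v t s - v (t+1) s) ?_
    · intro s; linarith [hkey s]
    · intro s
      have h1 : v t s ≤ r s (π (t+1) s) + γ * ∑ s', P s (π (t+1) s) s' * v t s' := by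
        rw [hgreedy t s, hv t s]
        exact Finset.le_sup' (fun a => r s a + γ * ∑ s', P s a s' * v t s') (mem_univ (π t s))
      have h2 := hv (t+1) s
      have h3 := sumsub (fun s' => P s (π (t+1) s) s') (v t) (v (t+1))
      beta_reduce at h3 ⊢
      linarith
  have chain : ∀ a b : ℕ, a ≤ b → ∀ s, v a s ≤ v b s := by
    intro a b hab
    induction hab with
    | refl => intro s; exact le_rfl
    | step h ih => intro s; exact (ih s).trans (mono _ s)
  -- uniqueness of the fixed point for a given policy
  have uniqle : ∀ (σ : S → A) (u w : S → ℝ),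
      (∀ s, u s = r s (σ s) + γ * ∑ s', P s (σ s) s' * u s') →
      (∀ s, w s = r s (σ s) + γ * ∑ s', P s (σ s) s' * w s') →
      ∀ s, u s ≤ w s := by
    intro σ u w hu hw
    have hkey := pi_key_nonpos (fun s => P s (σ s))
      (fun s s' => hP0 _ _ _) (fun s => hP1 _ _) γ hγ0' hγ1
      (fun s => u s - w s) ?_
    · intro s; linarith [hkey s]
    · intro s
      have h3 := sumsub (fun s' => P s (σ s) s') u w
      have h1 := hu s
      have h2 := hw s
      beta_reduce at h3 ⊢
      linarith
  -- pigeonhole: some step does not change the value function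
  have hmm : ∃ m, v (m+1) = v m := by
    by_contra hcon
    push_neg at hcon
    have hinj : Function.Injective π := by
      intro a b hab
      by_contra hne
      have heq : v a = v b := by
        funext s
        exact le_antisymm
          (uniqle (π a) (v a) (v b) (hv a) (by rw [hab]; exact hv b) s)
          (uniqle (π a) (v b) (v a) (by rw [hab]; exact hv b) (hv a) s)
      rcases lt_or_gt_of_ne hne with h | h
      · apply hcon a
        funext s
        exact le_antisymm (by rw [heq]; exact chain (a+1) b h s) (mono a s)
      · apply hcon b
        funext s
        exact le_antisymm (by rw [← heq]; exact chain (b+1) a h s) (mono b s)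
    haveI := Finite.of_injective π hinj; exact not_finite ℕ
  obtain ⟨m, hm⟩ := hmm
  -- Bellman optimality at m
  have hbell : ∀ s, v m s
      = Finset.univ.sup' Finset.univ_nonempty
          (fun a => r s a + γ * ∑ s', P s a s' * v m s') := by
    intro s
    have h1 := hv (m+1) s
    rw [hm] at h1
    rw [h1, hgreedy m s]
  have opt : ∀ (σ : S → A) (vσ : S → ℝ),
      (∀ s, vσ s = r s (σ s) + γ * ∑ s', P s (σ s) s' * vσ s') →
      ∀ s, vσ s ≤ v m s := by
    intro σ vσ hσ
    have hkey := pi_key_nonpos (fun s => P s (σ s))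
      (fun s s' => hP0 _ _ _) (fun s => hP1 _ _) γ hγ0' hγ1
      (fun s => vσ s - v m s) ?_
    · intro s; linarith [hkey s]
    · intro s
      have h1 : r s (σ s) + γ * ∑ s', P s (σ s) s' * v m s' ≤ v m s := by
        rw [hbell s]
        exact Finset.le_sup' (fun a => r s a + γ * ∑ s', P s a s' * v m s') (mem_univ (σ s))
      have h2 := hσ s
      have h3 := sumsub (fun s' => P s (σ s) s') vσ (v m)
      beta_reduce at h3 ⊢
      linarith
  refine ⟨m, ?_, opt⟩
  intro t ht
  funext s
  exact le_antisymm (opt (π t) (v t) (hv t) s) (chain m t ht s)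
end

section
/- (Strict improvement when non-optimal.) Let π : S → A be a deterministic policy with value function v_π that does NOT satisfy the Bellman optimality equation, i.e., there exists a state s₀ with v_π s₀ ≠ max_{a ∈ A} (r s₀ a + γ * ∑_{s'} P s₀ a s' * v_π s'). Let π' be greedy with respect to q_π, i.e., q_π(s, π' s) = max_{a ∈ A} q_π(s, a) for all s, where q_π(s, a) = r s a + γ * ∑_{s'} P s a s' * v_π s'. Then v_π s ≤ v_{π'} s for all s ∈ S and v_{π'} ≠ v_π. -/
/-- Strict improvement when non-optimal: a greedy improvement of a policy
whose value function violates the Bellman optimality equation yields a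
pointwise-no-smaller and different value function. -/
theorem policy_improvement_strict
    {S A : Type*} [Fintype S] [Nonempty S] [Fintype A] [Nonempty A]
    (P : S → A → S → ℝ) (hP0 : ∀ s a s', 0 ≤ P s a s')
    (hP1 : ∀ s a, ∑ s', P s a s' = 1)
    (r : S → A → ℝ) (γ : ℝ) (hγ0 : 0 < γ) (hγ1 : γ < 1)
    (π π' : S → A) (vπ vπ' : S → ℝ)
    (hv : ∀ s, vπ s = r s (π s) + γ * ∑ s', P s (π s) s' * vπ s')
    (hv' : ∀ s, vπ' s = r s (π' s) + γ * ∑ s', P s (π' s) s' * vπ' s')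
    (hnotopt : ∃ s₀, vπ s₀ ≠ Finset.univ.sup' Finset.univ_nonempty
        (fun a => r s₀ a + γ * ∑ s', P s₀ a s' * vπ s'))
    (hgreedy : ∀ s, r s (π' s) + γ * ∑ s', P s (π' s) s' * vπ s'
        = Finset.univ.sup' Finset.univ_nonempty
            (fun a => r s a + γ * ∑ s', P s a s' * vπ s')) :
    (∀ s, vπ s ≤ vπ' s) ∧ vπ' ≠ vπ := by
  -- vπ s ≤ one-step greedy value
  have hstep : ∀ s, vπ s ≤ r s (π' s) + γ * ∑ s', P s (π' s) s' * vπ s' := by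
    intro s
    rw [hv s, hgreedy s]
    exact Finset.le_sup' (fun a => r s a + γ * ∑ s', P s a s' * vπ s')
      (Finset.mem_univ (π s))
  set d : S → ℝ := fun s => vπ' s - vπ s with hd
  -- d s ≥ γ * weighted avg of d
  have hineq : ∀ s, γ * ∑ s', P s (π' s) s' * d s' ≤ d s := by
    intro s
    have h1 := hstep s
    have h2 := hv' s
    have : γ * ∑ s', P s (π' s) s' * d s'
        = (γ * ∑ s', P s (π' s) s' * vπ' s') - (γ * ∑ s', P s (π' s) s' * vπ s') := by
      simp only [hd]
      rw [← mul_sub, ← Finset.sum_sub_distrib]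
      congr 1
      apply Finset.sum_congr rfl
      intro x _
      ring
    rw [this]
    simp only [hd]
    linarith
  -- minimum of d is nonneg
  obtain ⟨smin, _, hsmin⟩ := Finset.exists_min_image Finset.univ d Finset.univ_nonempty
  have hmin : ∀ s, d smin ≤ d s := fun s => hsmin s (Finset.mem_univ s)
  have havg : d smin ≤ ∑ s', P smin (π' smin) s' * d s' := by
    calc d smin = ∑ s', P smin (π' smin) s' * d smin := by
          rw [← Finset.sum_mul, hP1, one_mul]
      _ ≤ ∑ s', P smin (π' smin) s' * d s' := by
          apply Finset.sum_le_sum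
          intro i _
          exact mul_le_mul_of_nonneg_left (hmin i) (hP0 _ _ _)
  have hm0 : 0 ≤ d smin := by
    have h := hineq smin
    nlinarith [havg, hineq smin]
  have hle : ∀ s, vπ s ≤ vπ' s := by
    intro s
    have := le_trans hm0 (hmin s)
    simp only [hd] at this
    linarith
  refine ⟨hle, ?_⟩
  intro heq
  obtain ⟨s₀, hs₀⟩ := hnotopt
  apply hs₀
  rw [← hgreedy s₀]
  have := hv' s₀
  rw [heq] at this
  exact this
end

section
/- (Geometric convergence of value iteration.) Let v* : S → ℝ be the unique solution of the Bellman optimality equation v* = T* v*, where (T* v) s = max_{a ∈ A} (r s a + γ * ∑_{s'} P s a s' * v s'). Then for every starting function v : S → ℝ and every n ∈ ℕ, dist (T*^[n] v) v* ≤ γ^n * dist v v*, where T*^[n] denotes the n-fold iterate and dist is the supremum distance on S → ℝ. -/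
/-- Geometric convergence of value iteration:
`dist (T*^[n] v) v* ≤ γ ^ n * dist v v*`. -/
theorem value_iteration_geometric_convergence
    {S A : Type*} [Fintype S] [Nonempty S] [Fintype A] [Nonempty A]
    (P : S → A → S → ℝ) (hP0 : ∀ s a s', 0 ≤ P s a s')
    (hP1 : ∀ s a, ∑ s', P s a s' = 1)
    (r : S → A → ℝ) (γ : ℝ) (hγ0 : 0 < γ) (hγ1 : γ < 1)
    (vstar : S → ℝ)
    (hstar : ∀ s, vstar s = Finset.univ.sup' Finset.univ_nonempty
        (fun a => r s a + γ * ∑ s', P s a s' * vstar s'))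
    (v : S → ℝ) (n : ℕ) :
    dist ((fun (w : S → ℝ) (s : S) =>
            Finset.univ.sup' Finset.univ_nonempty
              (fun a => r s a + γ * ∑ s', P s a s' * w s'))^[n] v) vstar
      ≤ γ ^ n * dist v vstar := by
  set T : (S → ℝ) → S → ℝ := fun (w : S → ℝ) (s : S) =>
      Finset.univ.sup' Finset.univ_nonempty
        (fun a => r s a + γ * ∑ s', P s a s' * w s') with hT
  have hfix : T vstar = vstar := by
    funext s
    exact (hstar s).symm
  have hcontr : ∀ u w : S → ℝ, dist (T u) (T w) ≤ γ * dist u w := by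
    intro u w
    have h0 : 0 ≤ γ * dist u w := mul_nonneg hγ0.le dist_nonneg
    rw [dist_pi_le_iff h0]
    intro s
    have key : ∀ a : A,
        |(r s a + γ * ∑ s', P s a s' * u s') - (r s a + γ * ∑ s', P s a s' * w s')|
          ≤ γ * dist u w := by
      intro a
      have heq : (r s a + γ * ∑ s', P s a s' * u s') - (r s a + γ * ∑ s', P s a s' * w s')
          = γ * ∑ s', P s a s' * (u s' - w s') := by
        have hsum : ∑ s' : S, P s a s' * (u s' - w s')
            = (∑ s' : S, P s a s' * u s') - ∑ s' : S, P s a s' * w s' := by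
          rw [← Finset.sum_sub_distrib]
          exact Finset.sum_congr rfl (fun x _ => mul_sub _ _ _)
        rw [hsum]
        ring
      rw [heq, abs_mul, abs_of_pos hγ0]
      apply mul_le_mul_of_nonneg_left _ hγ0.le
      calc |∑ s', P s a s' * (u s' - w s')| ≤ ∑ s', |P s a s' * (u s' - w s')| :=
            Finset.abs_sum_le_sum_abs _ _
        _ ≤ ∑ s', P s a s' * dist u w := by
            apply Finset.sum_le_sum
            intro s' _
            rw [abs_mul, abs_of_nonneg (hP0 s a s')]
            apply mul_le_mul_of_nonneg_left _ (hP0 s a s')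
            calc |u s' - w s'| = dist (u s') (w s') := (Real.dist_eq _ _).symm
              _ ≤ dist u w := dist_le_pi_dist u w s'
        _ = dist u w := by rw [← Finset.sum_mul, hP1, one_mul]
    rw [Real.dist_eq, abs_sub_le_iff]
    constructor
    · apply sub_le_iff_le_add.mpr
      apply Finset.sup'_le
      intro a _
      have h1 := (abs_sub_le_iff.mp (key a)).1
      have h2 : (r s a + γ * ∑ s', P s a s' * w s') ≤
          Finset.univ.sup' Finset.univ_nonempty
            (fun a => r s a + γ * ∑ s', P s a s' * w s') :=
        Finset.le_sup' (fun a => r s a + γ * ∑ s', P s a s' * w s') (Finset.mem_univ a)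
      simp only [T]
      linarith
    · apply sub_le_iff_le_add.mpr
      apply Finset.sup'_le
      intro a _
      have h1 := (abs_sub_le_iff.mp (key a)).2
      have h2 : (r s a + γ * ∑ s', P s a s' * u s') ≤
          Finset.univ.sup' Finset.univ_nonempty
            (fun a => r s a + γ * ∑ s', P s a s' * u s') :=
        Finset.le_sup' (fun a => r s a + γ * ∑ s', P s a s' * u s') (Finset.mem_univ a)
      simp only [T]
      linarith
  have : dist (T^[n] v) vstar ≤ γ ^ n * dist v vstar := by
    induction n with
    | zero => simp
    | succ k ih =>
      have hiter : T^[k + 1] v = T (T^[k] v) := Function.iterate_succ_apply' T k v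
      calc dist (T^[k + 1] v) vstar = dist (T (T^[k] v)) (T vstar) := by rw [hiter, hfix]
        _ ≤ γ * dist (T^[k] v) vstar := hcontr _ _
        _ ≤ γ * (γ ^ k * dist v vstar) := by
            apply mul_le_mul_of_nonneg_left ih hγ0.le
        _ = γ ^ (k + 1) * dist v vstar := by ring
  exact this
end
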